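/- arXiv:1702.04072 — 2 statements merged into one kernel-verified Lean document; each statement's English description precedes it below -/
import Mathlib

section
/- Let b ≥ 2 be an integer, m and N positive integers, and ε a real with 6/⌊N/m⌋ ≤ ε ≤ 1/b^m. Then for any nonnegative integer M and any integer a with 0 ≤ a < b^m, the Lebesgue measure of the set {x ∈ (0,1) : |F(M, N, a·b^{-m}, (a+1)·b^{-m}, ({b^j x})_{j≥0})| > εN} is less than 2·b^{2m−2}·m·e^{−ε²·N·b^m/(6m)}. -/
open scoped Classical

/-- F(M,N,u,v,(x_j)) = |#{j : M ≤ j < M+N, u ≤ x_j < v} − (v−u)N| -/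
noncomputable def discCount (x : ℕ → ℝ) (M N : ℕ) (u v : ℝ) : ℝ :=
  |(((Finset.Ico M (M + N)).filter (fun j => u ≤ x j ∧ x j < v)).card : ℝ) - (v - u) * N|

open Finset

lemma sum_range_mul' (A B : ℕ) (hA : 0 < A) (f : ℕ → ℝ) :
    ∑ c ∈ range (A*B), f c = ∑ u ∈ range B, ∑ l ∈ range A, f (A*u + l) := by
  rw [← Finset.sum_product']
  apply Finset.sum_nbij' (fun c => (c / A, c % A)) (fun p => A * p.1 + p.2)
  · intro c hc
    simp only [Finset.mem_range] at hc
    simp only [Finset.mem_product, Finset.mem_range]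
    exact ⟨Nat.div_lt_iff_lt_mul hA |>.2 (by rwa [mul_comm]), Nat.mod_lt _ hA⟩
  · intro p hp
    simp only [Finset.mem_product, Finset.mem_range] at hp
    simp only [Finset.mem_range]
    calc A * p.1 + p.2 < A * p.1 + A := by omega
    _ = A * (p.1 + 1) := by ring
    _ ≤ A * B := Nat.mul_le_mul_left _ (by omega)
  · intro c _; exact Nat.div_add_mod c A
  · intro p hp
    simp only [Finset.mem_product, Finset.mem_range] at hp
    have h1 : (A * p.1 + p.2) / A = p.1 := by
      rw [Nat.mul_add_div hA, Nat.div_eq_of_lt hp.2, add_zero]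
    have h2 : (A * p.1 + p.2) % A = p.2 := by
      rw [Nat.mul_add_mod, Nat.mod_eq_of_lt hp.2]
    simp [h1, h2]
  · intro c _; simp [Nat.div_add_mod]

lemma exp_quad {l : ℝ} (hl : |l| ≤ 1) : Real.exp l ≤ 1 + l + (3/4) * l^2 := by
  have h := Real.exp_bound hl (n := 2) (by norm_num)
  have : ∑ m ∈ range 2, l ^ m / m.factorial = 1 + l := by
    simp [Finset.sum_range_succ]
  rw [this] at h
  have h2 : |l| ^ 2 = l ^ 2 := sq_abs l
  have := (abs_sub_le_iff.1 h).1
  rw [h2] at this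
  norm_num [Nat.factorial] at this
  linarith

lemma single_block_sum (b m s0 : ℕ) (hb : 0 < b) (w : ℕ → ℝ) :
    ∑ l ∈ range (b^(s0+m)), w (l / b^s0 % b^m)
      = (b:ℝ)^s0 * ∑ v ∈ range (b^m), w v := by
  have h : b^(s0+m) = b^s0 * b^m := pow_add b s0 m
  rw [h, sum_range_mul' _ _ (pow_pos hb s0)]
  have : ∀ v ∈ range (b^m), ∀ l ∈ range (b^s0),
      w ((b^s0 * v + l) / b^s0 % b^m) = w v := by
    intro v hv l hl
    simp only [mem_range] at hv hl
    rw [Nat.mul_add_div (pow_pos hb s0), Nat.div_eq_of_lt hl, add_zero,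
      Nat.mod_eq_of_lt hv]
  rw [Finset.sum_congr rfl (fun v hv => Finset.sum_congr rfl (this v hv))]
  simp only [Finset.sum_const, Finset.card_range, nsmul_eq_mul]
  rw [Finset.mul_sum]
  apply Finset.sum_congr rfl
  intro v _
  push_cast
  ring

lemma div_block_low (b m s0 u l : ℕ) (hb : 0 < b) (hl : l < b^(s0+m)) :
    (b^(s0+m) * u + l) / b^s0 % b^m = l / b^s0 % b^m := by
  have h : b^(s0+m) * u = b^s0 * (b^m * u) := by rw [pow_add]; ring
  rw [h, Nat.mul_add_div (pow_pos hb s0), add_comm, Nat.add_mul_mod_self_left]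

lemma div_block_high (b s0m t u l : ℕ) (hb : 0 < b) (hl : l < b^s0m) :
    (b^s0m * u + l) / b^(s0m + t) = u / b^t := by
  rw [pow_add, ← Nat.div_div_eq_div_mul, Nat.mul_add_div (pow_pos hb s0m),
    Nat.div_eq_of_lt hl, add_zero]

lemma block_mgf (b m : ℕ) (hb : 0 < b) (w : ℕ → ℝ) :
    ∀ (n s0 K : ℕ), s0 + n * m ≤ K →
    ∑ c ∈ range (b^K), ∏ i ∈ range n, w (c / b^(s0 + i*m) % b^m)
      = (b:ℝ)^(K - n*m) * (∑ v ∈ range (b^m), w v)^n := by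
  intro n
  induction n with
  | zero => intro s0 K hK; simp
  | succ n ih =>
    intro s0 K hK
    have hnm : (n+1) * m = n * m + m := by ring
    have hsplit : b^K = b^(s0+m) * b^(K - s0 - m) := by
      rw [← pow_add]; congr 1; omega
    rw [hsplit, sum_range_mul' _ _ (pow_pos hb _)]
    have key : ∀ u ∈ range (b^(K-s0-m)), ∀ l ∈ range (b^(s0+m)),
        ∏ i ∈ range (n+1), w ((b^(s0+m) * u + l) / b^(s0 + i*m) % b^m)
          = w (l / b^s0 % b^m) * ∏ i ∈ range n, w (u / b^(0 + i*m) % b^m) := by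
      intro u hu l hl
      simp only [mem_range] at hu hl
      rw [Finset.prod_range_succ', mul_comm]
      congr 1
      · simp only [zero_mul, add_zero]
        rw [div_block_low b m s0 u l hb hl]
      · apply Finset.prod_congr rfl
        intro i _
        have h1 : s0 + (i+1)*m = (s0 + m) + i*m := by ring
        rw [h1, div_block_high b (s0+m) (i*m) u l hb hl, zero_add]
    rw [Finset.sum_congr rfl (fun u hu => Finset.sum_congr rfl (key u hu))]
    have : ∀ u ∈ range (b^(K-s0-m)),
        ∑ l ∈ range (b^(s0+m)), w (l / b^s0 % b^m) * ∏ i ∈ range n, w (u / b^(0 + i*m) % b^m)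
        = ((b:ℝ)^s0 * ∑ v ∈ range (b^m), w v) * ∏ i ∈ range n, w (u / b^(0 + i*m) % b^m) := by
      intro u hu
      rw [← Finset.sum_mul, single_block_sum b m s0 hb w]
    rw [Finset.sum_congr rfl this, ← Finset.mul_sum, ih 0 (K - s0 - m) (by omega)]
    have hexp : (b:ℝ)^s0 * (b:ℝ)^(K - s0 - m - n*m) = (b:ℝ)^(K - (n+1)*m) := by
      rw [← pow_add]; congr 1; omega
    rw [← hexp]
    ring

lemma prod_ite_pow (n : ℕ) (P : ℕ → Prop) [DecidablePred P] (y : ℝ) :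
    ∏ i ∈ range n, (if P i then y else 1) = y ^ (((range n).filter P).card) := by
  rw [Finset.prod_ite, Finset.prod_const, Finset.prod_const_one, mul_one]

lemma mgf_sum (b m a : ℕ) (hb : 0 < b) (ha : a < b^m) (n s0 K : ℕ)
    (hK : s0 + n*m ≤ K) (y : ℝ) :
    ∑ c ∈ range (b^K), y ^ (((range n).filter (fun i => c / b^(s0+i*m) % b^m = a)).card)
      = (b:ℝ)^(K - n*m) * (y + ((b^m : ℕ) - 1 : ℝ))^n := by
  have h := block_mgf b m hb (fun v => if v = a then y else 1) n s0 K hK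
  have h2 : ∀ c, ∏ i ∈ range n, (fun v => if v = a then y else 1) (c / b^(s0+i*m) % b^m)
      = y ^ (((range n).filter (fun i => c / b^(s0+i*m) % b^m = a)).card) := by
    intro c
    exact prod_ite_pow n _ y
  rw [Finset.sum_congr rfl (fun c _ => h2 c)] at h
  rw [h]
  congr 1
  have e1 : ∀ v, (if v = a then y else 1) = (if v = a then y - 1 else 0) + 1 := by
    intro v; split <;> ring
  rw [Finset.sum_congr rfl (fun v _ => e1 v), Finset.sum_add_distrib,
    Finset.sum_ite_eq' (range (b^m)) a (fun _ => y - 1)]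
  simp only [Finset.mem_range.2 ha, if_true, Finset.sum_const, Finset.card_range,
    nsmul_eq_mul, mul_one]
  ring

lemma count_upper (s : Finset ℕ) (S : ℕ → ℕ) (θ lam : ℝ) (hlam : 0 ≤ lam) :
    (((s.filter (fun c => θ < (S c:ℝ))).card) : ℝ)
      ≤ Real.exp (-(lam*θ)) * ∑ c ∈ s, Real.exp lam ^ (S c) := by
  rw [Finset.mul_sum, Finset.card_filter]
  push_cast
  apply Finset.sum_le_sum
  intro c _
  by_cases h : θ < (S c : ℝ)
  · simp only [h, if_true]
    rw [← Real.exp_nat_mul, ← Real.exp_add]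
    rw [Real.one_le_exp_iff]
    nlinarith [(S c).cast_nonneg (α := ℝ)]
  · simp only [h, if_false]
    positivity

lemma count_lower (s : Finset ℕ) (S : ℕ → ℕ) (θ lam : ℝ) (hlam : 0 ≤ lam) :
    (((s.filter (fun c => (S c:ℝ) < θ)).card) : ℝ)
      ≤ Real.exp (lam*θ) * ∑ c ∈ s, Real.exp (-lam) ^ (S c) := by
  rw [Finset.mul_sum, Finset.card_filter]
  push_cast
  apply Finset.sum_le_sum
  intro c _
  by_cases h : (S c : ℝ) < θ
  · simp only [h, if_true]
    rw [← Real.exp_nat_mul, ← Real.exp_add]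
    rw [Real.one_le_exp_iff]
    nlinarith [(S c).cast_nonneg (α := ℝ)]
  · simp only [h, if_false]
    positivity

lemma class_tails (b m a : ℕ) (hb : 0 < b) (ha : a < b^m) (n s0 K : ℕ)
    (hK : s0 + n*m ≤ K) (lam t : ℝ) (hlam0 : 0 ≤ lam) (hlam1 : lam ≤ 1) :
    (((range (b^K)).filter (fun c =>
        t < |(((range n).filter (fun i => c / b^(s0+i*m) % b^m = a)).card : ℝ)
          - n * (1/(b:ℝ)^m)|)).card : ℝ)
      ≤ 2 * (b:ℝ)^K * Real.exp ((3/4) * n * (1/(b:ℝ)^m) * lam^2 - lam * t) := by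
  set p : ℝ := 1/(b:ℝ)^m with hp_def
  set S : ℕ → ℕ := fun c => ((range n).filter (fun i => c / b^(s0+i*m) % b^m = a)).card
    with hS_def
  have hβ : (1:ℝ) ≤ (b:ℝ)^m := one_le_pow₀ (by exact_mod_cast hb)
  have hβ0 : (0:ℝ) < (b:ℝ)^m := lt_of_lt_of_le one_pos hβ
  have hp0 : 0 < p := by positivity
  have hp1 : p ≤ 1 := by rw [hp_def]; rw [div_le_one hβ0]; exact hβ
  have hnm : n*m ≤ K := by omega
  have hbK : (b:ℝ)^(K - n*m) * ((b:ℝ)^m)^n = (b:ℝ)^K := by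
    rw [← pow_mul, mul_comm m n, ← pow_add]
    congr 1
    omega
  -- key mgf estimate
  have key : ∀ y : ℝ, 0 < y →
      (b:ℝ)^(K - n*m) * (y + (((b^m:ℕ):ℝ) - 1))^n
        ≤ (b:ℝ)^K * Real.exp ((n:ℝ) * p * (y - 1)) := by
    intro y hy
    have hbase0 : 0 ≤ 1 + p * (y - 1) := by
      have : 1 + p * (y - 1) = p * y + (1 - p) := by ring
      rw [this]
      have : 0 ≤ p * y := le_of_lt (mul_pos hp0 hy)
      linarith
    have hbm : ((b^m:ℕ):ℝ) = (b:ℝ)^m := by push_cast; ring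
    have step1 : (y + (((b^m:ℕ):ℝ) - 1))^n = ((b:ℝ)^m)^n * (1 + p * (y - 1))^n := by
      rw [← mul_pow]
      congr 1
      rw [hbm, hp_def]
      field_simp
      ring
    rw [step1]
    have step2 : (1 + p * (y - 1))^n ≤ Real.exp ((n:ℝ) * (p * (y - 1))) := by
      rw [Real.exp_nat_mul]
      have h1x : 1 + p * (y - 1) ≤ Real.exp (p * (y - 1)) := by
        linarith [Real.add_one_le_exp (p * (y - 1))]
      exact pow_le_pow_left₀ hbase0 h1x n
    calc (b:ℝ)^(K-n*m) * (((b:ℝ)^m)^n * (1 + p * (y-1))^n)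
        = (b:ℝ)^K * (1 + p * (y-1))^n := by rw [← mul_assoc, hbK]
      _ ≤ (b:ℝ)^K * Real.exp ((n:ℝ) * (p * (y - 1))) := by
          apply mul_le_mul_of_nonneg_left step2 (by positivity)
      _ = (b:ℝ)^K * Real.exp ((n:ℝ) * p * (y - 1)) := by rw [mul_assoc]
  -- upper tail
  have hup : (((range (b^K)).filter (fun c => (n:ℝ)*p + t < (S c:ℝ))).card : ℝ)
      ≤ (b:ℝ)^K * Real.exp ((3/4)*(n:ℝ)*p*lam^2 - lam*t) := by
    have h1 := count_upper (range (b^K)) S ((n:ℝ)*p + t) lam hlam0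
    have h2 := mgf_sum b m a hb ha n s0 K hK (Real.exp lam)
    simp only [hS_def] at h1
    rw [h2] at h1
    have h3 := key (Real.exp lam) (Real.exp_pos lam)
    calc (((range (b^K)).filter (fun c => (n:ℝ)*p + t < (S c:ℝ))).card : ℝ)
        ≤ Real.exp (-(lam*((n:ℝ)*p + t))) * ((b:ℝ)^(K - n*m) * (Real.exp lam + (((b^m:ℕ):ℝ) - 1))^n) := h1
      _ ≤ Real.exp (-(lam*((n:ℝ)*p + t))) * ((b:ℝ)^K * Real.exp ((n:ℝ)*p*(Real.exp lam - 1))) := by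
          apply mul_le_mul_of_nonneg_left h3 (le_of_lt (Real.exp_pos _))
      _ = (b:ℝ)^K * Real.exp ((n:ℝ)*p*(Real.exp lam - 1) - lam*((n:ℝ)*p + t)) := by
          rw [mul_comm, mul_assoc, ← Real.exp_add]
          try ring_nf
      _ ≤ (b:ℝ)^K * Real.exp ((3/4)*(n:ℝ)*p*lam^2 - lam*t) := by
          apply mul_le_mul_of_nonneg_left _ (by positivity)
          apply Real.exp_le_exp.2
          have hq := exp_quad (l := lam) (by rw [abs_of_nonneg hlam0]; exact hlam1)
          have hnp : (0:ℝ) ≤ (n:ℝ) * p := by positivity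
          nlinarith
  -- lower tail
  have hdn : (((range (b^K)).filter (fun c => (S c:ℝ) < (n:ℝ)*p - t)).card : ℝ)
      ≤ (b:ℝ)^K * Real.exp ((3/4)*(n:ℝ)*p*lam^2 - lam*t) := by
    have h1 := count_lower (range (b^K)) S ((n:ℝ)*p - t) lam hlam0
    have h2 := mgf_sum b m a hb ha n s0 K hK (Real.exp (-lam))
    simp only [hS_def] at h1
    rw [h2] at h1
    have h3 := key (Real.exp (-lam)) (Real.exp_pos _)
    calc (((range (b^K)).filter (fun c => (S c:ℝ) < (n:ℝ)*p - t)).card : ℝ)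
        ≤ Real.exp (lam*((n:ℝ)*p - t)) * ((b:ℝ)^(K - n*m) * (Real.exp (-lam) + (((b^m:ℕ):ℝ) - 1))^n) := h1
      _ ≤ Real.exp (lam*((n:ℝ)*p - t)) * ((b:ℝ)^K * Real.exp ((n:ℝ)*p*(Real.exp (-lam) - 1))) := by
          apply mul_le_mul_of_nonneg_left h3 (le_of_lt (Real.exp_pos _))
      _ = (b:ℝ)^K * Real.exp ((n:ℝ)*p*(Real.exp (-lam) - 1) + lam*((n:ℝ)*p - t)) := by
          rw [mul_comm, mul_assoc, ← Real.exp_add]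
          try ring_nf
      _ ≤ (b:ℝ)^K * Real.exp ((3/4)*(n:ℝ)*p*lam^2 - lam*t) := by
          apply mul_le_mul_of_nonneg_left _ (by positivity)
          apply Real.exp_le_exp.2
          have hq := exp_quad (l := -lam) (by rw [abs_neg, abs_of_nonneg hlam0]; exact hlam1)
          have hnp : (0:ℝ) ≤ (n:ℝ) * p := by positivity
          nlinarith
  -- combine
  have hsub : (range (b^K)).filter (fun c => t < |(S c:ℝ) - (n:ℝ)*p|)
      ⊆ ((range (b^K)).filter (fun c => (n:ℝ)*p + t < (S c:ℝ)))
        ∪ ((range (b^K)).filter (fun c => (S c:ℝ) < (n:ℝ)*p - t)) := by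
    intro c hc
    simp only [Finset.mem_filter, Finset.mem_union] at hc ⊢
    rcases lt_abs.1 hc.2 with h | h
    · exact Or.inl ⟨hc.1, by linarith⟩
    · exact Or.inr ⟨hc.1, by linarith⟩
  calc (((range (b^K)).filter (fun c => t < |(S c:ℝ) - (n:ℝ)*p|)).card : ℝ)
      ≤ ((((range (b^K)).filter (fun c => (n:ℝ)*p + t < (S c:ℝ)))
          ∪ ((range (b^K)).filter (fun c => (S c:ℝ) < (n:ℝ)*p - t))).card : ℝ) := by
        exact_mod_cast Finset.card_le_card hsub
    _ ≤ (((range (b^K)).filter (fun c => (n:ℝ)*p + t < (S c:ℝ))).card : ℝ)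
        + (((range (b^K)).filter (fun c => (S c:ℝ) < (n:ℝ)*p - t)).card : ℝ) := by
        exact_mod_cast Finset.card_union_le _ _
    _ ≤ 2 * (b:ℝ)^K * Real.exp ((3/4)*(n:ℝ)*p*lam^2 - lam*t) := by linarith

lemma floor_calc (b L : ℕ) (hb : 0 < b) (x : ℝ) (hx0 : 0 ≤ x) {j : ℕ} (hj : j ≤ L) :
    Int.floor ((b:ℝ)^j * x) = ((Nat.floor ((b:ℝ)^L * x) / b^(L-j) : ℕ) : ℤ) := by
  set c := Nat.floor ((b:ℝ)^L * x) with hc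
  set K := b^(L-j) with hK
  have hK0 : 0 < K := pow_pos hb _
  have hKpos : (0:ℝ) < (K:ℝ) := by exact_mod_cast hK0
  have hbLj : (b:ℝ)^j * (K:ℝ) = (b:ℝ)^L := by
    rw [hK]; push_cast; rw [← pow_add]; congr 1; omega
  have hc1 : (c:ℝ) ≤ (b:ℝ)^L * x := Nat.floor_le (by positivity)
  have hc2 : (b:ℝ)^L * x < c + 1 := Nat.lt_floor_add_one _
  have h1 : ((c/K : ℕ):ℝ) * K ≤ (c:ℝ) := by
    exact_mod_cast Nat.cast_le.2 (Nat.div_mul_le_self c K)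
  have h3n : c + 1 ≤ (c/K + 1) * K := by
    have := Nat.div_add_mod c K
    have := Nat.mod_lt c hK0
    have h4 : (c/K + 1) * K = K * (c/K) + K := by ring
    omega
  have h3 : (c:ℝ) + 1 ≤ (((c/K : ℕ):ℝ) + 1) * K := by exact_mod_cast h3n
  rw [Int.floor_eq_iff]
  rw [Int.cast_natCast]
  constructor
  · apply le_of_mul_le_mul_right _ hKpos
    calc ((c/K : ℕ):ℝ) * K ≤ (c:ℝ) := h1
      _ ≤ (b:ℝ)^L * x := hc1
      _ = (b:ℝ)^j * x * K := by rw [← hbLj]; ring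
  · apply lt_of_mul_lt_mul_right _ (le_of_lt hKpos)
    calc (b:ℝ)^j * x * K = (b:ℝ)^L * x := by rw [← hbLj]; ring
      _ < (c:ℝ) + 1 := hc2
      _ ≤ (((c/K : ℕ):ℝ) + 1) * K := h3

lemma mod_eq_iff (n q a : ℕ) (ha : a < q) : n % q = a ↔ n = q * (n/q) + a := by
  have := Nat.div_add_mod n q
  omega

lemma cond_iff (b m a : ℕ) (hb : 0 < b) (ha : a < b^m) (x : ℝ) (hx0 : 0 < x)
    (L j : ℕ) (hj : j + m ≤ L) :
    ((a:ℝ)/(b:ℝ)^m ≤ Int.fract ((b:ℝ)^j * x) ∧ Int.fract ((b:ℝ)^j * x) < ((a:ℝ)+1)/(b:ℝ)^m)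
      ↔ (Nat.floor ((b:ℝ)^L * x)) / b^(L-j-m) % b^m = a := by
  set c := Nat.floor ((b:ℝ)^L * x) with hc
  have hβ0 : (0:ℝ) < (b:ℝ)^m := by positivity
  set f := Int.fract ((b:ℝ)^j * x) with hf
  have step1 : ((a:ℝ)/(b:ℝ)^m ≤ f ∧ f < ((a:ℝ)+1)/(b:ℝ)^m)
      ↔ Int.floor ((b:ℝ)^m * f) = (a:ℤ) := by
    rw [Int.floor_eq_iff]
    push_cast
    rw [div_le_iff₀ hβ0, lt_div_iff₀ hβ0]
    constructor
    · rintro ⟨h1, h2⟩; constructor <;> nlinarith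
    · rintro ⟨h1, h2⟩; constructor <;> nlinarith
  have step2 : Int.floor ((b:ℝ)^m * f)
      = Int.floor ((b:ℝ)^(j+m) * x) - (b^m : ℕ) * Int.floor ((b:ℝ)^j * x) := by
    have hfr : f = (b:ℝ)^j * x - Int.floor ((b:ℝ)^j * x) := by
      rw [hf, ← Int.self_sub_floor]
    rw [hfr]
    have : (b:ℝ)^m * ((b:ℝ)^j * x - Int.floor ((b:ℝ)^j * x))
        = (b:ℝ)^(j+m) * x - (((b^m : ℕ) * Int.floor ((b:ℝ)^j * x) : ℤ) : ℝ) := by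
      push_cast; rw [pow_add]; ring
    rw [this, Int.floor_sub_intCast]
  have hfl1 := floor_calc b L hb x (le_of_lt hx0) (j := j+m) hj
  have hfl2 := floor_calc b L hb x (le_of_lt hx0) (j := j) (by omega)
  have hdd : c / b^(L-(j+m)) / b^m = c / b^(L-j) := by
    rw [Nat.div_div_eq_div_mul, ← pow_add]
    congr 2
    omega
  have heq : L - (j+m) = L - j - m := by omega
  rw [← hc] at hfl1 hfl2
  rw [heq] at hdd hfl1
  rw [step1, step2, hfl1, hfl2, mod_eq_iff _ _ _ ha, hdd]
  constructor
  · intro h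
    have h2 : ((c / b^(L-j-m) : ℕ) : ℤ) = ((b^m : ℕ) : ℤ) * ((c / b^(L-j) : ℕ) : ℤ) + (a : ℤ) := by
      omega
    exact_mod_cast h2
  · intro h
    have h2 : ((c / b^(L-j-m) : ℕ) : ℤ) = ((b^m : ℕ) : ℤ) * ((c / b^(L-j) : ℕ) : ℤ) + (a : ℤ) := by
      exact_mod_cast h
    omega

lemma partition_Icc (m N : ℕ) (hm : 0 < m) (hN : m ≤ N) :
    Finset.Icc 1 N
      = (range m).biUnion (fun r => (range ((N-1-r)/m + 1)).image (fun i => 1+r+i*m)) := by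
  ext s
  simp only [Finset.mem_Icc, Finset.mem_biUnion, Finset.mem_range, Finset.mem_image]
  constructor
  · rintro ⟨h1, h2⟩
    refine ⟨(s-1) % m, Nat.mod_lt _ hm, (s-1)/m, ?_, ?_⟩
    · rw [Nat.lt_succ_iff, Nat.le_div_iff_mul_le hm]
      have hd := Nat.div_add_mod (s-1) m
      have hmod := Nat.mod_lt (s-1) hm
      have hcomm : m * ((s-1)/m) = ((s-1)/m) * m := mul_comm _ _
      omega
    · have hd := Nat.div_add_mod (s-1) m
      have hcomm : m * ((s-1)/m) = ((s-1)/m) * m := mul_comm _ _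
      omega
  · rintro ⟨r, hr, i, hi, rfl⟩
    rw [Nat.lt_succ_iff, Nat.le_div_iff_mul_le hm] at hi
    omega

lemma mem_class_mod (m r i : ℕ) (hr : r < m) : (1 + r + i*m - 1) % m = r := by
  have : 1 + r + i*m - 1 = r + i*m := by omega
  rw [this, Nat.add_mul_mod_self_right, Nat.mod_eq_of_lt hr]

lemma count_split (m N : ℕ) (hm : 0 < m) (hN : m ≤ N) (P : ℕ → Prop) [DecidablePred P] :
    (((Finset.Icc 1 N).filter P).card : ℝ)
      = ∑ r ∈ range m, (((range ((N-1-r)/m + 1)).filter (fun i => P (1+r+i*m))).card : ℝ) := by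
  rw [partition_Icc m N hm hN, Finset.filter_biUnion]
  rw [Finset.card_biUnion]
  · push_cast
    congr 1
    ext r
    congr 1
    rw [Finset.filter_image]
    rw [Finset.card_image_of_injective]
    intro i1 i2 h
    simp only at h
    have h2 : i1 * m = i2 * m := by omega
    exact Nat.eq_of_mul_eq_mul_right hm h2
  · intro r1 hr1 r2 hr2 hne
    simp only [Finset.mem_coe, Finset.mem_range] at hr1 hr2
    apply Finset.disjoint_left.2
    intro s hs1 hs2
    rw [Finset.mem_filter, Finset.mem_image] at hs1 hs2
    obtain ⟨⟨i1, hi1, rfl⟩, _⟩ := hs1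
    obtain ⟨⟨i2, hi2, he⟩, _⟩ := hs2
    apply hne
    have m1 := mem_class_mod m r1 i1 hr1
    have m2 := mem_class_mod m r2 i2 hr2
    rw [he] at m2
    omega

lemma event_subset (b m a M N : ℕ) (hb : 0 < b) (hm : 0 < m) (ha : a < b^m) (ε : ℝ) :
    {x ∈ Set.Ioo (0:ℝ) 1 | ε * N < |discCount (fun j => Int.fract ((b:ℝ)^j * x)) M N
        ((a:ℝ)/(b:ℝ)^m) (((a:ℝ)+1)/(b:ℝ)^m)|}
    ⊆ ⋃ c ∈ ((range (b^(M+N+m))).filter (fun c =>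
        ε * N < |((((Finset.Icc 1 N).filter (fun s => c / b^s % b^m = a)).card : ℝ)
          - (N:ℝ) * (1/(b:ℝ)^m))|)),
      Set.Ico ((c:ℝ)/(b:ℝ)^(M+N+m)) (((c:ℝ)+1)/(b:ℝ)^(M+N+m)) := by
  intro x hx
  obtain ⟨⟨hx0, hx1⟩, hbad⟩ := hx
  set L := M + N + m with hL
  set c := Nat.floor ((b:ℝ)^L * x) with hc
  have hbL : (0:ℝ) < (b:ℝ)^L := by positivity
  have hcL : c < b^L := by
    rw [hc, Nat.floor_lt (by positivity)]
    push_cast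
    nlinarith
  have hcount : ((Finset.Ico M (M+N)).filter (fun j =>
        (a:ℝ)/(b:ℝ)^m ≤ Int.fract ((b:ℝ)^j * x)
          ∧ Int.fract ((b:ℝ)^j * x) < ((a:ℝ)+1)/(b:ℝ)^m)).card
      = ((Finset.Icc 1 N).filter (fun s => c / b^s % b^m = a)).card := by
    apply Finset.card_bij' (fun j _ => M + N - j) (fun s _ => M + N - s)
    · intro j hj
      rw [Finset.mem_filter, Finset.mem_Ico] at hj
      rw [Finset.mem_filter, Finset.mem_Icc]
      obtain ⟨⟨hj1, hj2⟩, hcond⟩ := hj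
      refine ⟨by omega, ?_⟩
      have := (cond_iff b m a hb ha x hx0 L j (by omega)).1 hcond
      rwa [show L - j - m = M + N - j by omega] at this
    · intro s hs
      rw [Finset.mem_filter, Finset.mem_Icc] at hs
      rw [Finset.mem_filter, Finset.mem_Ico]
      obtain ⟨⟨hs1, hs2⟩, hcond⟩ := hs
      refine ⟨by omega, ?_⟩
      have := (cond_iff b m a hb ha x hx0 L (M + N - s) (by omega)).2
      rw [show L - (M + N - s) - m = s by omega] at this
      exact this hcond
    · intro j hj
      rw [Finset.mem_filter, Finset.mem_Ico] at hj
      omega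
    · intro s hs
      rw [Finset.mem_filter, Finset.mem_Icc] at hs
      omega
  simp only [Set.mem_iUnion, Finset.mem_filter, Finset.mem_range]
  refine ⟨c, ⟨hcL, ?_⟩, ?_, ?_⟩
  · -- badness transfers
    rw [discCount] at hbad
    rw [abs_abs] at hbad
    rw [hcount] at hbad
    have hvu : (((a:ℝ)+1)/(b:ℝ)^m - (a:ℝ)/(b:ℝ)^m) * N = (N:ℝ) * (1/(b:ℝ)^m) := by
      rw [div_sub_div_same]
      ring_nf
    rwa [hvu] at hbad
  · -- lower
    rw [div_le_iff₀ hbL]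
    calc (c:ℝ) ≤ (b:ℝ)^L * x := Nat.floor_le (by positivity)
      _ = x * (b:ℝ)^L := by ring
  · -- upper
    rw [lt_div_iff₀ hbL]
    calc x * (b:ℝ)^L = (b:ℝ)^L * x := by ring
      _ < (c:ℝ) + 1 := Nat.lt_floor_add_one _


set_option maxHeartbeats 2000000 in
theorem stmt1 (b m N : ℕ) (hb : 2 ≤ b) (hm : 0 < m) (hN : 0 < N)
    (ε : ℝ) (hε₁ : 6 / ((N / m : ℕ) : ℝ) ≤ ε) (hε₂ : ε ≤ 1 / (b : ℝ) ^ m)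
    (M a : ℕ) (ha : a < b ^ m) :
    MeasureTheory.volume {x ∈ Set.Ioo (0 : ℝ) 1 |
        ε * N < |discCount (fun j => Int.fract ((b : ℝ) ^ j * x)) M N
          ((a : ℝ) / (b : ℝ) ^ m) (((a : ℝ) + 1) / (b : ℝ) ^ m)|} <
      ENNReal.ofReal (2 * (b : ℝ) ^ (2 * m - 2) * m *
        Real.exp (-(ε ^ 2 * N * (b : ℝ) ^ m / (6 * m)))) := by
  have hb0 : 0 < b := by omega
  have hb2 : (2:ℝ) ≤ (b:ℝ) := by exact_mod_cast hb
  have hβ2 : (2:ℝ) ≤ (b:ℝ)^m := by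
    calc (2:ℝ) = 2^1 := by norm_num
      _ ≤ (2:ℝ)^m := pow_le_pow_right₀ (by norm_num) hm
      _ ≤ (b:ℝ)^m := by
          apply pow_le_pow_left₀ (by norm_num) hb2
  have hβ0 : (0:ℝ) < (b:ℝ)^m := by positivity
  have hbig1 : (1:ℝ) ≤ (b:ℝ)^(2*m-2) := one_le_pow₀ (by linarith)
  have hm1 : (1:ℝ) ≤ (m:ℝ) := by exact_mod_cast hm
  have hm0R : (0:ℝ) < (m:ℝ) := by positivity
  have hN0R : (0:ℝ) < (N:ℝ) := by exact_mod_cast hN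
  by_cases hk : N / m = 0
  · -- trivial case : N < m
    rw [hk] at hε₁
    norm_num at hε₁
    have hNm : N < m := ((Nat.div_eq_zero_iff).1 hk).resolve_left (by omega)
    have hεβ : ε * (b:ℝ)^m ≤ 1 := by
      rw [le_div_iff₀ hβ0] at hε₂; linarith
    have hεβ0 : 0 ≤ ε * (b:ℝ)^m := mul_nonneg hε₁ (le_of_lt hβ0)
    have hE1 : ε ^ 2 * N * (b:ℝ)^m / (6*m) ≤ 1/12 := by
      have h3 : (ε * (b:ℝ)^m) * (ε * (b:ℝ)^m) ≤ 1 := by nlinarith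
      have h2 : ε^2 * (b:ℝ)^m ≤ 1/(b:ℝ)^m := by
        rw [le_div_iff₀ hβ0]; nlinarith
      have h1 : ε ^ 2 * N * (b:ℝ)^m ≤ (N:ℝ) / (b:ℝ)^m := by
        rw [div_eq_mul_inv]
        have := mul_le_mul_of_nonneg_left h2 (le_of_lt hN0R)
        rw [div_eq_mul_inv] at this
        nlinarith
      have hNm' : (N:ℝ) ≤ (m:ℝ) - 1 := by
        have : (N:ℝ) + 1 ≤ m := by exact_mod_cast hNm
        linarith
      have h4 : (N:ℝ)/(b:ℝ)^m ≤ (N:ℝ)/2 :=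
        div_le_div_of_nonneg_left (le_of_lt hN0R) (by norm_num) hβ2
      rw [div_le_iff₀ (by positivity)]
      nlinarith
    have hexp : (11:ℝ)/12 ≤ Real.exp (-(ε ^ 2 * N * (b:ℝ)^m / (6*m))) := by
      have := Real.add_one_le_exp (-(ε ^ 2 * N * (b:ℝ)^m / (6*m)))
      linarith
    have hR : (1:ℝ) < 2 * (b:ℝ)^(2*m-2) * m * Real.exp (-(ε ^ 2 * N * (b:ℝ)^m / (6*m))) := by
      have he0 : (0:ℝ) < Real.exp (-(ε ^ 2 * N * (b:ℝ)^m / (6*m))) := Real.exp_pos _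
      have hXm : (1:ℝ) ≤ (b:ℝ)^(2*m-2) * m := by
        nlinarith [mul_nonneg (sub_nonneg.2 hbig1) (sub_nonneg.2 hm1)]
      have hprod : (1:ℝ) * (11/12) ≤ ((b:ℝ)^(2*m-2) * m) * Real.exp (-(ε ^ 2 * N * (b:ℝ)^m / (6*m))) :=
        mul_le_mul hXm hexp (by norm_num) (by linarith)
      nlinarith
    calc MeasureTheory.volume {x ∈ Set.Ioo (0 : ℝ) 1 |
          ε * N < |discCount (fun j => Int.fract ((b : ℝ) ^ j * x)) M N
            ((a : ℝ) / (b : ℝ) ^ m) (((a : ℝ) + 1) / (b : ℝ) ^ m)|}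
        ≤ MeasureTheory.volume (Set.Ioo (0:ℝ) 1) := by
          apply MeasureTheory.measure_mono
          intro x hx; exact hx.1
      _ = 1 := by simp [Real.volume_Ioo]
      _ < ENNReal.ofReal (2 * (b:ℝ)^(2*m-2) * m * Real.exp (-(ε ^ 2 * N * (b:ℝ)^m / (6*m)))) := by
          rw [← ENNReal.ofReal_one]
          exact (ENNReal.ofReal_lt_ofReal_iff (by linarith)).2 hR
  · -- main case
    have hkpos : 0 < N / m := Nat.pos_of_ne_zero hk
    have hk0R : (0:ℝ) < ((N/m : ℕ):ℝ) := by exact_mod_cast hkpos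
    have hε0 : 0 < ε := lt_of_lt_of_le (by positivity) hε₁
    have hkβ : 6 * (b:ℝ)^m ≤ ((N/m:ℕ):ℝ) := by
      have h6 : 6 / ((N/m:ℕ):ℝ) ≤ 1/(b:ℝ)^m := le_trans hε₁ hε₂
      rw [div_le_div_iff₀ hk0R hβ0] at h6
      linarith
    have hk12 : (12:ℝ) ≤ ((N/m:ℕ):ℝ) := by linarith
    have hk12n : 12 ≤ N / m := by exact_mod_cast hk12
    have hNm' : 12 * m ≤ N := by
      have h1 : (N/m) * m ≤ N := Nat.div_mul_le_self N m
      have h2 : 12 * m ≤ (N/m) * m := Nat.mul_le_mul_right m hk12n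
      omega
    have hNmR : 12 * (m:ℝ) ≤ (N:ℝ) := by exact_mod_cast hNm'
    have hmN : m ≤ N := by omega
    have hεβ : ε * (b:ℝ)^m ≤ 1 := by
      rw [le_div_iff₀ hβ0] at hε₂; linarith
    set L := M + N + m with hLdef
    set t : ℝ := ε * N / m with htdef
    set lam : ℝ := ε * (b:ℝ)^m / 2 with hlamdef
    have hlam0 : 0 ≤ lam := by positivity
    have hlam1 : lam ≤ 1 := by rw [hlamdef]; linarith
    obtain ⟨nr, hnrdef⟩ : ∃ f : ℕ → ℕ, f = fun r => (N-1-r)/m + 1 := ⟨_, rfl⟩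
    obtain ⟨B, hBdef⟩ : ∃ B : Finset ℕ, B = (range (b^L)).filter (fun c =>
        ε * N < |((((Finset.Icc 1 N).filter (fun s => c / b^s % b^m = a)).card : ℝ)
          - (N:ℝ) * (1/(b:ℝ)^m))|) := ⟨_, rfl⟩
    obtain ⟨Tr, hTrdef⟩ : ∃ T : ℕ → Finset ℕ, T = fun r => (range (b^L)).filter (fun c =>
        t < |(((range (nr r)).filter (fun i => c / b^((1+r)+i*m) % b^m = a)).card : ℝ)
          - (nr r) * (1/(b:ℝ)^m)|) := ⟨_, rfl⟩
    -- volume bound via intervals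
    have hstep1 : MeasureTheory.volume {x ∈ Set.Ioo (0 : ℝ) 1 |
          ε * N < |discCount (fun j => Int.fract ((b : ℝ) ^ j * x)) M N
            ((a : ℝ) / (b : ℝ) ^ m) (((a : ℝ) + 1) / (b : ℝ) ^ m)|}
        ≤ ENNReal.ofReal ((B.card : ℝ) * (1/(b:ℝ)^L)) := by
      calc MeasureTheory.volume {x ∈ Set.Ioo (0 : ℝ) 1 |
            ε * N < |discCount (fun j => Int.fract ((b : ℝ) ^ j * x)) M N
              ((a : ℝ) / (b : ℝ) ^ m) (((a : ℝ) + 1) / (b : ℝ) ^ m)|}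
          ≤ MeasureTheory.volume (⋃ c ∈ B,
              Set.Ico ((c:ℝ)/(b:ℝ)^L) (((c:ℝ)+1)/(b:ℝ)^L)) := by
            apply MeasureTheory.measure_mono
            rw [hBdef]
            exact event_subset b m a M N hb0 hm ha ε
        _ ≤ ∑ c ∈ B, MeasureTheory.volume (Set.Ico ((c:ℝ)/(b:ℝ)^L) (((c:ℝ)+1)/(b:ℝ)^L)) :=
            MeasureTheory.measure_biUnion_finset_le B _
        _ = ∑ c ∈ B, ENNReal.ofReal (1/(b:ℝ)^L) := by
            apply Finset.sum_congr rfl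
            intro c _
            rw [Real.volume_Ico]
            congr 1
            rw [div_sub_div_same]
            ring_nf
        _ = B.card • ENNReal.ofReal (1/(b:ℝ)^L) := Finset.sum_const _
        _ = ENNReal.ofReal ((B.card : ℝ) * (1/(b:ℝ)^L)) := by
            rw [nsmul_eq_mul, ← ENNReal.ofReal_natCast B.card,
              ← ENNReal.ofReal_mul (Nat.cast_nonneg _)]
    -- pigeonhole : B covered by classes
    have hstep2 : B ⊆ (range m).biUnion Tr := by
      intro c hcB
      rw [hBdef, Finset.mem_filter] at hcB
      obtain ⟨hcrange, hbadc⟩ := hcB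
      rw [Finset.mem_biUnion]
      by_contra hcon
      push_neg at hcon
      have hnottail : ∀ r ∈ range m,
          |(((range (nr r)).filter (fun i => c / b^((1+r)+i*m) % b^m = a)).card : ℝ)
            - (nr r) * (1/(b:ℝ)^m)| ≤ t := by
        intro r hr
        have := hcon r hr
        rw [hTrdef, Finset.mem_filter] at this
        push_neg at this
        exact this hcrange
      have hsplit : ((((Finset.Icc 1 N).filter (fun s => c / b^s % b^m = a)).card : ℕ):ℝ)
          = ∑ r ∈ range m, ((((range (nr r)).filter
              (fun i => c / b^((1+r)+i*m) % b^m = a)).card : ℕ):ℝ) := by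
        rw [hnrdef]
        exact count_split m N hm hmN (fun s => c / b^s % b^m = a)
      have hNsplit : (N:ℝ) = ∑ r ∈ range m, ((nr r : ℕ):ℝ) := by
        have h0 := count_split m N hm hmN (fun _ => True)
        simp only [Finset.filter_true] at h0
        rw [Nat.card_Icc] at h0
        simp only [Finset.card_range] at h0
        simp only [hnrdef]
        exact_mod_cast h0
      have habs : |((((Finset.Icc 1 N).filter (fun s => c / b^s % b^m = a)).card : ℝ)
          - (N:ℝ) * (1/(b:ℝ)^m))| ≤ ε * N := by
        rw [hsplit]
        have hdist : (∑ r ∈ range m, (((range (nr r)).filter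
              (fun i => c / b^((1+r)+i*m) % b^m = a)).card : ℝ)) - (N:ℝ) * (1/(b:ℝ)^m)
            = ∑ r ∈ range m, ((((range (nr r)).filter
              (fun i => c / b^((1+r)+i*m) % b^m = a)).card : ℝ) - (nr r) * (1/(b:ℝ)^m)) := by
          rw [Finset.sum_sub_distrib]
          congr 1
          rw [hNsplit, Finset.sum_mul]
        rw [hdist]
        calc |∑ r ∈ range m, ((((range (nr r)).filter
              (fun i => c / b^((1+r)+i*m) % b^m = a)).card : ℝ) - (nr r) * (1/(b:ℝ)^m))|
            ≤ ∑ r ∈ range m, |(((range (nr r)).filter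
              (fun i => c / b^((1+r)+i*m) % b^m = a)).card : ℝ) - (nr r) * (1/(b:ℝ)^m)| :=
              Finset.abs_sum_le_sum_abs _ _
          _ ≤ ∑ _r ∈ range m, t := Finset.sum_le_sum hnottail
          _ = m * t := by rw [Finset.sum_const, Finset.card_range, nsmul_eq_mul]
          _ = ε * N := by rw [htdef]; field_simp
      linarith
    -- per class bounds
    have hclass : ∀ r ∈ range m, ((Tr r).card : ℝ)
        ≤ 2 * (b:ℝ)^L * Real.exp ((3/4) * (nr r) * (1/(b:ℝ)^m) * lam^2 - lam * t) := by
      intro r hr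
      rw [Finset.mem_range] at hr
      have hdivm : ((N-1-r)/m)*m ≤ N-1-r := Nat.div_mul_le_self _ _
      have hK : (1+r) + (nr r)*m ≤ L := by
        simp only [hnrdef]
        have h5 : ((N-1-r)/m + 1)*m = ((N-1-r)/m)*m + m := by ring
        rw [hLdef]
        omega
      rw [hTrdef]
      exact class_tails b m a hb0 ha (nr r) (1+r) L hK lam t hlam0 hlam1
    -- exponent strictly small
    have hexpstrict : ∀ r ∈ range m,
        (3/4) * ((nr r):ℝ) * (1/(b:ℝ)^m) * lam^2 - lam * t
          < -(ε ^ 2 * N * (b:ℝ)^m / (6*m)) := by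
      intro r hr
      have hnrle : ((nr r):ℝ) ≤ (N:ℝ)/m + 1 := by
        simp only [hnrdef]
        push_cast
        have h1 : (((N-1-r)/m : ℕ):ℝ) ≤ ((N-1-r : ℕ):ℝ)/(m:ℝ) := Nat.cast_div_le
        have h2 : ((N-1-r : ℕ):ℝ) ≤ (N:ℝ) := by exact_mod_cast Nat.sub_le _ _ |>.trans (Nat.sub_le _ _)
        have h3 : ((N-1-r : ℕ):ℝ)/(m:ℝ) ≤ (N:ℝ)/m := by
          apply div_le_div_of_nonneg_right h2 (le_of_lt hm0R) |>.trans_eq rfl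
        linarith
      have hq12 : (12:ℝ) ≤ (N:ℝ)/m := by
        rw [le_div_iff₀ hm0R]; linarith
      have hcore : (3:ℝ)/16 * ((nr r):ℝ) < (N:ℝ)/m/3 := by
        have : (3:ℝ)/16 * ((N:ℝ)/m + 1) < (N:ℝ)/m/3 := by linarith
        nlinarith
      have hεβpos : (0:ℝ) < ε^2 * (b:ℝ)^m := by positivity
      have lhseq : (3/4) * ((nr r):ℝ) * (1/(b:ℝ)^m) * lam^2 - lam * t
          = ε^2 * (b:ℝ)^m * ((3/16) * ((nr r):ℝ) - (N:ℝ)/m/2) := by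
        rw [hlamdef, htdef]
        field_simp
        ring
      have rhseq : -(ε ^ 2 * N * (b:ℝ)^m / (6*m))
          = ε^2 * (b:ℝ)^m * (-((N:ℝ)/m/6)) := by
        field_simp
      rw [lhseq, rhseq]
      apply mul_lt_mul_of_pos_left _ hεβpos
      linarith
    -- cardinality chain
    have hcard : (B.card : ℝ) < 2 * (m:ℝ) * (b:ℝ)^L
        * Real.exp (-(ε ^ 2 * N * (b:ℝ)^m / (6*m))) := by
      calc (B.card : ℝ) ≤ (((range m).biUnion Tr).card : ℝ) := by
            exact_mod_cast Finset.card_le_card hstep2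
        _ ≤ ∑ r ∈ range m, ((Tr r).card : ℝ) := by
            exact_mod_cast Finset.card_biUnion_le
        _ ≤ ∑ r ∈ range m, 2 * (b:ℝ)^L
              * Real.exp ((3/4) * (nr r) * (1/(b:ℝ)^m) * lam^2 - lam * t) :=
            Finset.sum_le_sum hclass
        _ < ∑ r ∈ range m, 2 * (b:ℝ)^L * Real.exp (-(ε ^ 2 * N * (b:ℝ)^m / (6*m))) := by
            apply Finset.sum_lt_sum_of_nonempty (Finset.nonempty_range_iff.2 (by omega))
            intro r hr
            have := hexpstrict r hr
            have hb2L : (0:ℝ) < 2 * (b:ℝ)^L := by positivity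
            exact mul_lt_mul_of_pos_left (Real.exp_lt_exp.2 this) hb2L
        _ = 2 * (m:ℝ) * (b:ℝ)^L * Real.exp (-(ε ^ 2 * N * (b:ℝ)^m / (6*m))) := by
            rw [Finset.sum_const, Finset.card_range, nsmul_eq_mul]
            ring
    -- conclude
    have hfinal : (B.card : ℝ) * (1/(b:ℝ)^L)
        < 2 * (b:ℝ)^(2*m-2) * m * Real.exp (-(ε ^ 2 * N * (b:ℝ)^m / (6*m))) := by
      have hbL0 : (0:ℝ) < (b:ℝ)^L := by positivity
      have he0 : (0:ℝ) < Real.exp (-(ε ^ 2 * N * (b:ℝ)^m / (6*m))) := Real.exp_pos _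
      have h1 : (B.card : ℝ) * (1/(b:ℝ)^L) < 2 * (m:ℝ)
          * Real.exp (-(ε ^ 2 * N * (b:ℝ)^m / (6*m))) := by
        rw [mul_one_div, div_lt_iff₀ hbL0]
        calc (B.card : ℝ) < 2 * (m:ℝ) * (b:ℝ)^L
              * Real.exp (-(ε ^ 2 * N * (b:ℝ)^m / (6*m))) := hcard
          _ = 2 * (m:ℝ) * Real.exp (-(ε ^ 2 * N * (b:ℝ)^m / (6*m))) * (b:ℝ)^L := by ring
      calc (B.card : ℝ) * (1/(b:ℝ)^L)
          < 2 * (m:ℝ) * Real.exp (-(ε ^ 2 * N * (b:ℝ)^m / (6*m))) := h1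
        _ ≤ 2 * (b:ℝ)^(2*m-2) * m * Real.exp (-(ε ^ 2 * N * (b:ℝ)^m / (6*m))) := by
            nlinarith [mul_nonneg (sub_nonneg.2 hbig1) (le_of_lt he0), hm0R]
    calc MeasureTheory.volume {x ∈ Set.Ioo (0 : ℝ) 1 |
          ε * N < |discCount (fun j => Int.fract ((b : ℝ) ^ j * x)) M N
            ((a : ℝ) / (b : ℝ) ^ m) (((a : ℝ) + 1) / (b : ℝ) ^ m)|}
        ≤ ENNReal.ofReal ((B.card : ℝ) * (1/(b:ℝ)^L)) := hstep1
      _ < ENNReal.ofReal (2 * (b : ℝ) ^ (2 * m - 2) * m *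
            Real.exp (-(ε ^ 2 * N * (b : ℝ) ^ m / (6 * m)))) :=
          (ENNReal.ofReal_lt_ofReal_iff (by positivity)).2 hfinal
end

section
/- For every positive integer n, Σ_{j=1}^{n} 2^{j-1} · (2j+2)/(2^{2j+2} + 1) < 3/4. -/
lemma partial_sum_aux (n : ℕ) :
    ∑ j ∈ Finset.Icc 1 n, ((j : ℝ) + 1) / 2 ^ (j + 2)
      = 3 / 4 - ((n : ℝ) + 3) / 2 ^ (n + 2) := by
  induction n with
  | zero => simp; norm_num
  | succ n ih =>
    rw [Finset.sum_Icc_succ_top (by omega : 1 ≤ n + 1), ih]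
    have h2 : (0:ℝ) < 2 ^ (n + 2) := by positivity
    push_cast
    field_simp
    ring

lemma term_lt (j : ℕ) (hj : 1 ≤ j) :
    (2 : ℝ) ^ (j - 1) * ((2 * (j : ℝ) + 2) / (2 ^ (2 * j + 2) + 1))
      < ((j : ℝ) + 1) / 2 ^ (j + 2) := by
  have hD : (0:ℝ) < 2 ^ (2 * j + 2) + 1 := by positivity
  have hE : (0:ℝ) < 2 ^ (j + 2) := by positivity
  rw [mul_div_assoc', div_lt_div_iff₀ hD hE]
  have h1 : (2:ℝ) ^ (j - 1) * 2 ^ (j + 2) = 2 ^ (2 * j + 1) := by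
    rw [← pow_add]; congr 1; omega
  have h2 : (2:ℝ) ^ (2 * j + 2) = 2 * 2 ^ (2 * j + 1) := by
    rw [← pow_succ']
  have hjpos : (0:ℝ) < (j : ℝ) + 1 := by positivity
  nlinarith [pow_pos (by norm_num : (0:ℝ) < 2) (2 * j + 1)]

theorem stmt8 (n : ℕ) (hn : 1 ≤ n) :
    ∑ j ∈ Finset.Icc 1 n,
      (2 : ℝ) ^ (j - 1) * ((2 * (j : ℝ) + 2) / (2 ^ (2 * j + 2) + 1)) < 3 / 4 := by
  have hne : (Finset.Icc 1 n).Nonempty := by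
    exact Finset.nonempty_Icc.mpr hn
  have hlt : ∑ j ∈ Finset.Icc 1 n,
      (2 : ℝ) ^ (j - 1) * ((2 * (j : ℝ) + 2) / (2 ^ (2 * j + 2) + 1))
      < ∑ j ∈ Finset.Icc 1 n, ((j : ℝ) + 1) / 2 ^ (j + 2) := by
    apply Finset.sum_lt_sum_of_nonempty hne
    intro j hj
    exact term_lt j (Finset.mem_Icc.mp hj).1
  rw [partial_sum_aux] at hlt
  have : (0:ℝ) < ((n : ℝ) + 3) / 2 ^ (n + 2) := by positivity
  linarith
end
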